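/- arXiv:math/0505262 — 2 statements merged into one kernel-verified Lean document; each statement's English description precedes it below -/
import Mathlib

section
/- The poset 𝔅𝔅𝔇 is Y-multiranked by the sorting map: if Q covers P in 𝔅𝔅𝔇, then the weight of Q equals the weight of P plus 1, and for every i ≥ 1 the i-th largest part of P (taken as 0 when i exceeds the width of P) is at most the i-th largest part of Q; that is, the decreasing rearrangement mw*(Q) covers mw*(P) in Young's lattice. Moreover, every covering pair λ ⋖ μ of partitions in Young's lattice is of the form mw*(P) ⋖ mw*(Q) for some covering pair Q ⋗ P in 𝔅𝔅𝔇, and mw* maps the set of compositions onto the set of all partitions. -/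
/-- A composition: a finite list of positive integers. -/
def IsComposition (P : List ℕ) : Prop := ∀ x ∈ P, 0 < x

/-- Covering relation of the poset 𝔅𝔅𝔇: insert a part 1 at any position,
or increase one part by 1. -/
def coverBBD (P Q : List ℕ) : Prop :=
  (∃ i, i ≤ P.length ∧ Q = P.take i ++ 1 :: P.drop i) ∨
  ∃ j, j < P.length ∧ Q = P.set j (P.getD j 0 + 1)

/-- `mwStar P` is the decreasing rearrangement of `P`. -/
def mwStar (P : List ℕ) : List ℕ := ((P : Multiset ℕ).sort (· ≤ ·)).reverse

/-- A partition: a weakly decreasing list of positive integers. -/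
def IsPartition (l : List ℕ) : Prop := (∀ x ∈ l, 0 < x) ∧ l.Pairwise (· ≥ ·)

/-- Covering in Young's lattice: the weight goes up by one and every part weakly increases
(parts beyond the width are taken to be `0`). -/
def YoungCover (lam mu : List ℕ) : Prop :=
  mu.sum = lam.sum + 1 ∧ ∀ i, lam.getD i 0 ≤ mu.getD i 0

open List in
lemma mwStar_perm (P : List ℕ) : mwStar P ~ P := by
  refine (List.reverse_perm _).trans ?_
  rw [← Multiset.coe_eq_coe, Multiset.sort_eq]

lemma mwStar_sorted (P : List ℕ) : (mwStar P).Pairwise (· ≥ ·) := by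
  have := Multiset.pairwise_sort (r := (· ≤ ·)) (P : Multiset ℕ)
  rw [mwStar, List.pairwise_reverse]
  exact this

lemma mwStar_eq_of_sorted {l : List ℕ} (h : l.Pairwise (· ≥ ·)) : mwStar l = l :=
  List.Perm.eq_of_pairwise' (mwStar_sorted l) h (mwStar_perm l)

lemma filt2 {l : List ℕ} (h : l.Pairwise (· ≥ ·)) {m i : ℕ}
    (hi : i < (l.filter (fun x => m ≤ x)).length) : m ≤ l.getD i 0 := by
  induction l generalizing i with
  | nil => simp at hi
  | cons a t ih =>
    rw [List.pairwise_cons] at h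
    by_cases hm : m ≤ a
    · rw [List.filter_cons_of_pos (by simpa using hm)] at hi
      cases i with
      | zero => simpa using hm
      | succ i => exact ih h.2 (by simpa using hi)
    · exfalso
      rw [List.filter_cons_of_neg (by simpa using hm)] at hi
      have ht : t.filter (fun x => m ≤ x) = [] := by
        rw [List.filter_eq_nil_iff]
        intro x hx
        have := h.1 x hx
        simp only [decide_eq_true_eq]
        omega
      rw [ht] at hi
      simp at hi

lemma filt1 {l : List ℕ} (h : l.Pairwise (· ≥ ·)) {m i : ℕ} (hm : 1 ≤ m)
    (hi : m ≤ l.getD i 0) : i < (l.filter (fun x => m ≤ x)).length := by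
  induction l generalizing i with
  | nil => simp [List.getD] at hi; omega
  | cons a t ih =>
    rw [List.pairwise_cons] at h
    cases i with
    | zero =>
      simp only [List.getD_cons_zero] at hi
      rw [List.filter_cons_of_pos (by simpa using hi)]
      simp
    | succ i =>
      simp only [List.getD_cons_succ] at hi
      have h2 := ih h.2 hi
      have hlen : i < t.length := by
        by_contra hc
        rw [List.getD_eq_default _ _ (le_of_not_gt hc)] at hi; omega
      have hmem : t.getD i 0 ∈ t := by
        rw [List.getD_eq_getElem _ _ hlen]
        exact List.getElem_mem hlen
      have hma : m ≤ a := le_trans hi (h.1 _ hmem)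
      rw [List.filter_cons_of_pos (by simpa using hma)]
      simpa using h2

lemma mono_getD {l l' : List ℕ} (hl : l.Pairwise (· ≥ ·)) (hl' : l'.Pairwise (· ≥ ·))
    (hc : ∀ m, 1 ≤ m → (l.filter (fun x => m ≤ x)).length ≤ (l'.filter (fun x => m ≤ x)).length)
    (i : ℕ) : l.getD i 0 ≤ l'.getD i 0 := by
  rcases Nat.eq_zero_or_pos (l.getD i 0) with h0 | h1
  · omega
  · exact filt2 hl' (lt_of_lt_of_le (filt1 hl h1 le_rfl) (hc _ h1))

open List in
lemma set_perm (l : List ℕ) (j v : ℕ) (h : j < l.length) :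
    l.set j v ~ v :: l.eraseIdx j := by
  induction l generalizing j with
  | nil => simp at h
  | cons a t ih =>
    cases j with
    | zero => simp
    | succ j =>
      simp only [List.set_cons_succ, List.eraseIdx_cons_succ]
      exact ((ih j (by simpa using h)).cons a).trans (List.Perm.swap _ _ _)

open List in
lemma self_perm_eraseIdx (l : List ℕ) (j : ℕ) (h : j < l.length) :
    l ~ l.getD j 0 :: l.eraseIdx j := by
  induction l generalizing j with
  | nil => simp at h
  | cons a t ih =>
    cases j with
    | zero => simp
    | succ j =>
      simp only [List.getD_cons_succ, List.eraseIdx_cons_succ]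
      exact ((ih j (by simpa using h)).cons a).trans (List.Perm.swap _ _ _)

lemma sum_le_of_getD {lam mu : List ℕ} (hlam : ∀ x ∈ lam, 0 < x)
    (h : ∀ i, lam.getD i 0 ≤ mu.getD i 0) : lam.sum ≤ mu.sum := by
  induction lam generalizing mu with
  | nil => simp
  | cons a t ih =>
    cases mu with
    | nil =>
      have h0 := h 0
      have ha := hlam a (by simp)
      simp at h0
      omega
    | cons b s =>
      have h0 := h 0
      simp only [List.getD_cons_zero] at h0
      have hts := ih (fun x hx => hlam x (by simp [hx])) (fun i => by simpa using h (i + 1))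
      simp only [List.sum_cons]
      omega

lemma eq_of_getD {lam mu : List ℕ} (hlam : ∀ x ∈ lam, 0 < x) (hmu : ∀ x ∈ mu, 0 < x)
    (h : ∀ i, lam.getD i 0 ≤ mu.getD i 0) (hs : lam.sum = mu.sum) : lam = mu := by
  induction lam generalizing mu with
  | nil =>
    cases mu with
    | nil => rfl
    | cons b s =>
      exfalso
      have hb := hmu b (by simp)
      simp only [List.sum_nil, List.sum_cons] at hs
      omega
  | cons a t ih =>
    cases mu with
    | nil =>
      exfalso
      have ha := hlam a (by simp)
      have h0 := h 0
      simp at h0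
      omega
    | cons b s =>
      have h0 := h 0
      simp only [List.getD_cons_zero] at h0
      have htail : ∀ i, t.getD i 0 ≤ s.getD i 0 := fun i => by simpa using h (i + 1)
      have hts := sum_le_of_getD (fun x hx => hlam x (by simp [hx])) htail
      simp only [List.sum_cons] at hs
      have hab : a = b := by omega
      have : t = s := ih (fun x hx => hlam x (by simp [hx])) (fun x hx => hmu x (by simp [hx]))
        htail (by omega)
      rw [hab, this]

lemma young_step {lam mu : List ℕ} (hlam : ∀ x ∈ lam, 0 < x) (hmu : ∀ x ∈ mu, 0 < x)
    (hs : mu.sum = lam.sum + 1) (h : ∀ i, lam.getD i 0 ≤ mu.getD i 0) :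
    (∃ j, j < lam.length ∧ mu = lam.set j (lam.getD j 0 + 1)) ∨ mu = lam ++ [1] := by
  induction lam generalizing mu with
  | nil =>
    right
    cases mu with
    | nil => simp at hs
    | cons b s =>
      simp only [List.sum_cons, List.sum_nil] at hs
      have hb := hmu b (by simp)
      have hb1 : b = 1 := by omega
      have hs0 : s.sum = 0 := by omega
      have hsnil : s = [] := by
        cases s with
        | nil => rfl
        | cons c s' =>
          exfalso
          have := hmu c (by simp)
          simp only [List.sum_cons] at hs0
          omega
      simp [hb1, hsnil]
  | cons a t ih =>
    cases mu with
    | nil => simp [List.sum_cons] at hs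
    | cons b s =>
      have h0 := h 0
      simp only [List.getD_cons_zero] at h0
      have htail : ∀ i, t.getD i 0 ≤ s.getD i 0 := fun i => by simpa using h (i + 1)
      have hts := sum_le_of_getD (fun x hx => hlam x (by simp [hx])) htail
      simp only [List.sum_cons] at hs
      rcases eq_or_lt_of_le h0 with hab | hab
      · have hss : s.sum = t.sum + 1 := by omega
        rcases ih (fun x hx => hlam x (by simp [hx])) (fun x hx => hmu x (by simp [hx]))
          hss htail with ⟨j, hj, hset⟩ | happ
        · left
          refine ⟨j + 1, by simpa using hj, ?_⟩
          simp [← hab, hset]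
        · right
          simp [← hab, happ]
      · have hb : b = a + 1 := by omega
        have hst : t = s := eq_of_getD (fun x hx => hlam x (by simp [hx]))
          (fun x hx => hmu x (by simp [hx])) htail (by omega)
        left
        exact ⟨0, by simp, by simp [hb, hst]⟩

theorem stmt2 :
    (∀ P Q : List ℕ, IsComposition P → IsComposition Q → coverBBD P Q →
      YoungCover (mwStar P) (mwStar Q)) ∧
    (∀ lam mu : List ℕ, IsPartition lam → IsPartition mu → YoungCover lam mu →
      ∃ P Q : List ℕ, IsComposition P ∧ IsComposition Q ∧ coverBBD P Q ∧
        mwStar P = lam ∧ mwStar Q = mu) ∧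
    (∀ lam : List ℕ, IsPartition lam → ∃ P : List ℕ, IsComposition P ∧ mwStar P = lam) := by
  refine ⟨?_, ?_, ?_⟩
  · intro P Q _ _ hcov
    have key : Q.sum = P.sum + 1 ∧
        ∀ m, 1 ≤ m → (P.filter (fun x => m ≤ x)).length ≤ (Q.filter (fun x => m ≤ x)).length := by
      rcases hcov with ⟨i, hi, rfl⟩ | ⟨j, hj, rfl⟩
      · have hperm : List.Perm (P.take i ++ 1 :: P.drop i) (1 :: P) := by
          have := List.perm_middle (a := 1) (l₁ := P.take i) (l₂ := P.drop i)
          simpa [List.take_append_drop] using this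
        constructor
        · rw [hperm.sum_eq]
          simp [Nat.add_comm]
        · intro m hm
          rw [(hperm.filter (fun x => m ≤ x)).length_eq]
          by_cases h1 : m ≤ 1
          · rw [List.filter_cons_of_pos (by simpa using h1)]
            simp
          · rw [List.filter_cons_of_neg (by simpa using h1)]
      · have hq : List.Perm (P.set j (P.getD j 0 + 1)) ((P.getD j 0 + 1) :: P.eraseIdx j) :=
          set_perm P j _ hj
        have hp : List.Perm P (P.getD j 0 :: P.eraseIdx j) := self_perm_eraseIdx P j hj
        constructor
        · rw [hq.sum_eq, hp.sum_eq]
          simp [List.sum_cons]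
          omega
        · intro m hm
          rw [(hq.filter (fun x => m ≤ x)).length_eq, (hp.filter (fun x => m ≤ x)).length_eq]
          by_cases hma : m ≤ P.getD j 0
          · rw [List.filter_cons_of_pos (by simpa using hma),
              List.filter_cons_of_pos (by simp only [decide_eq_true_eq]; omega)]
            simp
          · rw [List.filter_cons_of_neg (by simpa using hma)]
            by_cases hma1 : m ≤ P.getD j 0 + 1
            · rw [List.filter_cons_of_pos (by simpa using hma1)]
              simp
            · rw [List.filter_cons_of_neg (by simpa using hma1)]
    constructor
    · rw [(mwStar_perm Q).sum_eq, (mwStar_perm P).sum_eq]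
      exact key.1
    · refine mono_getD (mwStar_sorted P) (mwStar_sorted Q) (fun m hm => ?_)
      rw [((mwStar_perm P).filter (fun x => m ≤ x)).length_eq,
        ((mwStar_perm Q).filter (fun x => m ≤ x)).length_eq]
      exact key.2 m hm
  · intro lam mu hlam hmu hYC
    obtain ⟨hs, hptw⟩ := hYC
    refine ⟨lam, mu, hlam.1, hmu.1, ?_, mwStar_eq_of_sorted hlam.2, mwStar_eq_of_sorted hmu.2⟩
    rcases young_step hlam.1 hmu.1 hs hptw with ⟨j, hj, hset⟩ | happ
    · exact Or.inr ⟨j, hj, hset⟩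
    · exact Or.inl ⟨lam.length, le_rfl, by simpa using happ⟩
  · intro lam hlam
    exact ⟨lam, hlam.1, mwStar_eq_of_sorted hlam.2⟩
end

section
/- Let α be a composition of N with r ≥ 1 parts which is not all-ones (so N > r), and let k ≥ r. Then a_{n,k}^α / k^n converges to 2^{k−r} / (k^N · (k−r)!) as n → ∞, where a_{n,k}^α is the number of saturated chains in 𝔑 starting at α and ending at a composition of n with k parts. -/
/-- Covering relation of the poset 𝔑: prepend a part 1, append a part 1,
or increase one part by 1. -/
def coverN (P Q : List ℕ) : Prop :=
  Q = 1 :: P ∨ Q = P ++ [1] ∨ ∃ j, j < P.length ∧ Q = P.set j (P.getD j 0 + 1)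

/-- `ank cover α n k` is the number of saturated chains (with respect to `cover`)
starting at `α` and ending at a composition of `n` with `k` parts. -/
noncomputable def ank (cover : List ℕ → List ℕ → Prop) (α : List ℕ) (n k : ℕ) : ℕ :=
  Nat.card {c : List (List ℕ) //
    c.Chain' cover ∧ c.head? = some α ∧
      ∃ Q, c.getLast? = some Q ∧ Q.sum = n ∧ Q.length = k}

/-- The generating function `L_k^α(t) = Σ_n a_{n,k}^α t^n`. -/
noncomputable def Lser (cover : List ℕ → List ℕ → Prop) (α : List ℕ) (k : ℕ) :
    PowerSeries ℤ :=
  PowerSeries.mk fun n => (ank cover α n k : ℤ)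

def gfun (k : ℕ) : ℕ → ℕ → ℕ
  | 0, ℓ => if ℓ = k then 1 else 0
  | m+1, ℓ => ℓ * gfun k m ℓ + 2 * gfun k m (ℓ+1)

lemma sum_set_succ : ∀ (P : List ℕ) (j : ℕ), j < P.length →
    (P.set j (P.getD j 0 + 1)).sum = P.sum + 1 := by
  intro P
  induction P with
  | nil => intro j h; simp at h
  | cons a t ih =>
    intro j h
    cases j with
    | zero => simp [List.set]; omega
    | succ j =>
      simp only [List.set, List.sum_cons, List.getD_cons_succ]
      rw [ih j (by simpa using h)]
      omega

lemma coverN_sum {P Q : List ℕ} (h : coverN P Q) : Q.sum = P.sum + 1 := by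
  rcases h with rfl | rfl | ⟨j, hj, rfl⟩
  · simp; omega
  · simp
  · exact sum_set_succ P j hj

lemma coverN_length {P Q : List ℕ} (h : coverN P Q) :
    Q.length = P.length ∨ Q.length = P.length + 1 := by
  rcases h with rfl | rfl | ⟨j, hj, rfl⟩
  · right; simp
  · right; simp
  · left; simp

def ChainT (β : List ℕ) (n k : ℕ) : Type :=
  {c : List (List ℕ) // c.Chain' coverN ∧ c.head? = some β ∧
    ∃ Q, c.getLast? = some Q ∧ Q.sum = n ∧ Q.length = k}

lemma chain_sum_le : ∀ (t : List (List ℕ)) (γ Q : List ℕ), t.Chain' coverN →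
    t.head? = some γ → t.getLast? = some Q → γ.sum ≤ Q.sum := by
  intro t
  induction t with
  | nil => intro γ Q _ h; simp at h
  | cons a s ih =>
    intro γ Q hc hh hl
    simp only [List.head?_cons, Option.some.injEq] at hh
    subst hh
    cases s with
    | nil =>
      simp only [List.getLast?_singleton, Option.some.injEq] at hl
      subst hl; exact le_refl _
    | cons b s' =>
      change List.IsChain _ _ at hc; rw [List.isChain_cons_cons] at hc
      rw [List.getLast?_cons_cons] at hl
      have := ih b Q hc.2 (by simp) hl
      have := coverN_sum hc.1
      omega

/-- every chain from β ending at weight β.sum is the singleton [β]. -/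
lemma chain_base {β : List ℕ} {k : ℕ} (c : ChainT β β.sum k) : c.1 = [β] := by
  obtain ⟨c, hc, hh, Q, hl, hQs, hQl⟩ := c
  cases c with
  | nil => simp at hh
  | cons a t =>
    simp only [List.head?_cons, Option.some.injEq] at hh
    subst hh
    cases t with
    | nil => rfl
    | cons b t' =>
      change List.IsChain _ _ at hc; rw [List.isChain_cons_cons] at hc
      rw [List.getLast?_cons_cons] at hl
      have h1 := chain_sum_le (b :: t') b Q hc.2 (by simp) hl
      have h2 := coverN_sum hc.1
      omega

lemma all_ones_of_rot : ∀ β : List ℕ, 1 :: β = β ++ [1] → β.sum = β.length := by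
  intro β
  induction β with
  | nil => intro _; rfl
  | cons a t ih =>
    intro h
    simp only [List.cons_append, List.cons.injEq] at h
    obtain ⟨rfl, h2⟩ := h
    simp [ih h2]; omega

variable (β : List ℕ)

noncomputable def cov : Fin β.length ⊕ Fin 2 → List ℕ :=
  Sum.elim (fun j => β.set j (β.getD j 0 + 1))
    (fun i => if i = 0 then 1 :: β else β ++ [1])

lemma cov_cover : ∀ x, coverN β (cov β x) := by
  rintro (j | i)
  · exact Or.inr (Or.inr ⟨j, j.2, rfl⟩)
  · by_cases h : i = 0
    · simp [cov, h, coverN]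
    · simp [cov, h, coverN]

lemma cov_length : ∀ x, (cov β x).length = Sum.elim (fun _ : Fin β.length => β.length)
    (fun _ : Fin 2 => β.length + 1) x := by
  rintro (j | i)
  · simp [cov]
  · by_cases h : i = 0 <;> simp [cov, h]

lemma cov_inj (hβ : β.length < β.sum) : Function.Injective (cov β) := by
  rintro (j | i) (j' | i') h
  · by_cases hjj : (j : ℕ) = (j' : ℕ)
    · congr 1; exact Fin.ext hjj
    · exfalso
      simp only [cov, Sum.elim_inl] at h
      have e3 := List.getElem_of_eq h (show (j:ℕ) < (β.set (j:ℕ) (β.getD j 0 + 1)).length by simp [j.2])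
      rw [List.getElem_set_self, List.getElem_set_ne (show (j':ℕ) ≠ (j:ℕ) by omega)] at e3
      simp only [List.getD_eq_getElem β 0 j.2] at e3
      omega
  · exfalso
    have hl := congrArg List.length h
    rw [cov_length, cov_length] at hl
    simp at hl
  · exfalso
    have hl := congrArg List.length h
    rw [cov_length, cov_length] at hl
    simp at hl
  · congr 1
    by_cases hi : i = 0 <;> by_cases hi' : i' = 0
    · rw [hi, hi']
    · exfalso
      simp only [cov, Sum.elim_inr, hi, hi', ite_true, ite_false] at h
      have := all_ones_of_rot β h
      omega
    · exfalso
      simp only [cov, Sum.elim_inr, hi, hi', ite_true, ite_false] at h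
      have := all_ones_of_rot β h.symm
      omega
    · have hiv : (i:ℕ) ≠ 0 := fun hv => hi (Fin.ext hv)
      have hiv' : (i':ℕ) ≠ 0 := fun hv => hi' (Fin.ext hv)
      have := i.2; have := i'.2
      exact Fin.ext (by omega)

lemma cov_surj {γ : List ℕ} (h : coverN β γ) : ∃ x, cov β x = γ := by
  rcases h with rfl | rfl | ⟨j, hj, rfl⟩
  · exact ⟨Sum.inr 0, by simp [cov]⟩
  · exact ⟨Sum.inr 1, by simp [cov]⟩
  · exact ⟨Sum.inl ⟨j, hj⟩, rfl⟩

lemma main_count (k : ℕ) : ∀ m, ∀ (β : List ℕ) (n : ℕ), β.length < β.sum → n = β.sum + m →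
    Finite (ChainT β n k) ∧ Nat.card (ChainT β n k) = gfun k m β.length := by
  intro m
  induction m with
  | zero =>
    intro β n hβ hn
    have hn' : n = β.sum := by omega
    subst hn'
    by_cases hkl : β.length = k
    · have x0 : ChainT β β.sum k := ⟨[β], List.isChain_singleton β, rfl, β, rfl, rfl, hkl⟩
      haveI hsub : Subsingleton (ChainT β β.sum k) :=
        ⟨fun a b => Subtype.ext ((chain_base a).trans (chain_base b).symm)⟩
      refine ⟨Finite.of_subsingleton, ?_⟩
      rw [Nat.card_eq_one_iff_unique.mpr ⟨hsub, ⟨x0⟩⟩]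
      simp [gfun, hkl]
    · haveI : IsEmpty (ChainT β β.sum k) := by
        constructor
        rintro c
        obtain ⟨Q, hl, hQs, hQl⟩ := c.2.2.2
        have hc1 := chain_base c
        rw [hc1] at hl
        simp only [List.getLast?_singleton, Option.some.injEq] at hl
        subst hl
        exact hkl hQl
      refine ⟨inferInstance, ?_⟩
      rw [Nat.card_of_isEmpty]
      simp [gfun, hkl]
  | succ m ih =>
    intro β n hβ hn
    set T : Fin β.length ⊕ Fin 2 → Type := fun x => ChainT (cov β x) n k with hTdef
    have covsum : ∀ x, (cov β x).sum = β.sum + 1 := fun x => coverN_sum (cov_cover β x)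
    have covlt : ∀ x, (cov β x).length < (cov β x).sum := by
      intro x
      have h1 := cov_length β x
      rw [covsum]
      rcases x with j | i <;> simp only [Sum.elim_inl, Sum.elim_inr] at h1 <;> omega
    have hT : ∀ x, Finite (T x) ∧ Nat.card (T x) = gfun k m (cov β x).length :=
      fun x => ih (cov β x) n (covlt x) (by rw [covsum]; omega)
    have hG : ∀ p : (Σ x, T x), ((β :: p.2.1 : List (List ℕ)).Chain' coverN ∧
        (β :: p.2.1).head? = some β ∧
        ∃ Q, (β :: p.2.1).getLast? = some Q ∧ Q.sum = n ∧ Q.length = k) := by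
      rintro ⟨x, c, hc, hh, Q, hl, hQs, hQl⟩
      refine ⟨?_, rfl, Q, ?_, hQs, hQl⟩
      · change List.IsChain _ _; rw [List.isChain_cons]
        refine ⟨fun y hy => ?_, hc⟩
        rw [hh, Option.mem_def] at hy
        injection hy with hy'
        rw [← hy']
        exact cov_cover β x
      · cases c with
        | nil => simp at hh
        | cons d t => rw [List.getLast?_cons_cons]; exact hl
    set G : (Σ x, T x) → ChainT β n k := fun p => ⟨β :: p.2.1, hG p⟩ with hGdef
    have Ginj : Function.Injective G := by
      rintro ⟨x, c, hc⟩ ⟨x', c', hc'⟩ h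
      have h1 : β :: c = β :: c' := congrArg Subtype.val h
      have h2 : c = c' := by injection h1
      subst h2
      have e2 : some (cov β x) = some (cov β x') := by rw [← hc.2.1, ← hc'.2.1]
      injection e2 with e3
      have h3 : x = x' := cov_inj β hβ e3
      subst h3
      rfl
    have Gsurj : Function.Surjective G := by
      rintro ⟨c, hc, hh, Q, hl, hQs, hQl⟩
      cases c with
      | nil => simp at hh
      | cons a t =>
        simp only [List.head?_cons, Option.some.injEq] at hh
        subst hh
        cases t with
        | nil =>
          exfalso
          simp only [List.getLast?_singleton, Option.some.injEq] at hl
          subst hl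
          omega
        | cons d t' =>
          change List.IsChain _ _ at hc; rw [List.isChain_cons_cons] at hc
          obtain ⟨hcov, hc2⟩ := hc
          obtain ⟨x, hx⟩ := cov_surj (β := a) hcov
          refine ⟨⟨x, ⟨d :: t', hc2, by simp [hx], Q, ?_, hQs, hQl⟩⟩, ?_⟩
          · rw [← List.getLast?_cons_cons (l := t') (a := a)]; exact hl
          · apply Subtype.ext; rfl
    haveI hTf : ∀ x, Finite (T x) := fun x => (hT x).1
    haveI : Finite (Σ x, T x) := inferInstance
    refine ⟨Finite.of_surjective G Gsurj, ?_⟩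
    have hcard : Nat.card (ChainT β n k) = Nat.card (Σ x, T x) :=
      (Nat.card_eq_of_bijective G ⟨Ginj, Gsurj⟩).symm
    rw [hcard]
    classical
    haveI : ∀ x, Fintype (T x) := fun x => Fintype.ofFinite _
    rw [Nat.card_eq_fintype_card, Fintype.card_sigma]
    have hval : ∀ x, Fintype.card (T x) = gfun k m ((cov β x).length) := fun x => by
      rw [← Nat.card_eq_fintype_card]; exact (hT x).2
    rw [Fintype.sum_sum_type]
    have h1 : ∀ j : Fin β.length, Fintype.card (T (Sum.inl j)) = gfun k m β.length := by
      intro j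
      rw [hval]
      congr 1
      rw [cov_length]
      simp
    have h2 : ∀ i : Fin 2, Fintype.card (T (Sum.inr i)) = gfun k m (β.length + 1) := by
      intro i
      rw [hval]
      congr 1
      rw [cov_length]
      simp
    rw [Finset.sum_congr rfl (fun j _ => h1 j), Finset.sum_congr rfl (fun i _ => h2 i)]
    simp [gfun, Finset.sum_const, mul_comm]

section Analytic
open Filter

lemma gfun_of_gt (k : ℕ) : ∀ m ℓ, k < ℓ → gfun k m ℓ = 0 := by
  intro m
  induction m with
  | zero => intro ℓ h; simp [gfun]; omega
  | succ m ih =>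
    intro ℓ h
    simp [gfun, ih ℓ h, ih (ℓ+1) (by omega)]

lemma gfun_diag (k : ℕ) : ∀ m, gfun k m k = k ^ m := by
  intro m
  induction m with
  | zero => simp [gfun]
  | succ m ih => rw [gfun, ih, gfun_of_gt k m (k+1) (by omega)]; ring

/-- if v (m+1) = a v m + e m with 0 ≤ a < 1 and e → 0 then v → 0. -/
lemma tendsto_aux (a : ℝ) (h0 : 0 ≤ a) (h1 : a < 1) (e v : ℕ → ℝ)
    (he : Tendsto e atTop (nhds 0)) (hv : ∀ m, v (m+1) = a * v m + e m) :
    Tendsto v atTop (nhds 0) := by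
  rw [NormedAddCommGroup.tendsto_nhds_zero]
  intro ε hε
  have h1a : (0:ℝ) < 1 - a := by linarith
  have hε2 : 0 < ε * (1 - a) / 2 := by positivity
  obtain ⟨M, hM⟩ := (Metric.tendsto_atTop.mp he) (ε * (1 - a) / 2) hε2
  have key : ∀ t, |v (M + t)| ≤ a ^ t * |v M| + ε / 2 := by
    intro t
    induction t with
    | zero => simp; positivity
    | succ t iht =>
      have h2 : v (M + t + 1) = a * v (M + t) + e (M + t) := hv (M + t)
      have h3 : |e (M + t)| ≤ ε * (1 - a) / 2 := by
        have := hM (M + t) (by omega)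
        rw [Real.dist_eq, sub_zero] at this
        linarith
      have h4 : |v (M + t + 1)| ≤ a * |v (M + t)| + ε * (1 - a) / 2 := by
        rw [h2]
        calc |a * v (M + t) + e (M + t)| ≤ |a * v (M + t)| + |e (M + t)| := abs_add_le _ _
        _ ≤ a * |v (M + t)| + ε * (1 - a) / 2 := by
            rw [abs_mul, abs_of_nonneg h0]; linarith
      have h5 : a * |v (M + t)| ≤ a * (a ^ t * |v M| + ε / 2) :=
        mul_le_mul_of_nonneg_left iht h0
      have : (M + (t + 1)) = M + t + 1 := by omega
      rw [this]
      calc |v (M + t + 1)| ≤ a * (a ^ t * |v M| + ε / 2) + ε * (1 - a) / 2 := by linarith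
      _ ≤ a ^ (t+1) * |v M| + ε / 2 := by ring_nf; nlinarith [abs_nonneg (v M)]
  have hpow : Tendsto (fun t => a ^ t * |v M| + ε / 2) atTop (nhds (0 * |v M| + ε / 2)) :=
    ((tendsto_pow_atTop_nhds_zero_of_lt_one h0 h1).mul_const _).add_const _
  rw [zero_mul, zero_add] at hpow
  have : ∀ᶠ t in atTop, a ^ t * |v M| + ε / 2 < ε :=
    hpow.eventually_lt_const (by linarith)
  obtain ⟨T, hT⟩ := eventually_atTop.mp this
  rw [eventually_atTop]
  refine ⟨M + T, fun n hn => ?_⟩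
  have hn' : n = M + (n - M) := by omega
  calc ‖v n‖ = |v (M + (n - M))| := by rw [← hn']; rfl
  _ ≤ a ^ (n - M) * |v M| + ε / 2 := key _
  _ < ε := hT (n - M) (by omega)

lemma rec_limit (a L : ℝ) (h0 : 0 ≤ a) (h1 : a < 1) (u w : ℕ → ℝ)
    (hw : Tendsto w atTop (nhds L)) (hu : ∀ m, u (m+1) = a * u m + w m) :
    Tendsto u atTop (nhds (L / (1 - a))) := by
  have ha : (1 : ℝ) - a ≠ 0 := by linarith
  have hv : Tendsto (fun m => u m - L / (1 - a)) atTop (nhds 0) := by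
    apply tendsto_aux a h0 h1 (fun m => w m - L)
    · simpa using hw.sub_const L
    · intro m
      rw [hu m]
      field_simp
      ring
  have := hv.add_const (L / (1 - a))
  simpa using this

lemma gfun_limit (k : ℕ) (hk1 : 1 ≤ k) : ∀ d ℓ, ℓ + d = k →
    Tendsto (fun m => (gfun k m ℓ : ℝ) / (k : ℝ) ^ m) atTop
      (nhds ((2 : ℝ) ^ d / (Nat.factorial d : ℝ))) := by
  intro d
  induction d with
  | zero =>
    intro ℓ hℓ
    have hℓk : ℓ = k := by omega
    rw [hℓk]
    have hone : ∀ m, (gfun k m k : ℝ) / (k : ℝ) ^ m = 1 := by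
      intro m
      rw [gfun_diag]
      push_cast
      rw [div_self (by positivity)]
    rw [show ((2:ℝ) ^ 0 / (Nat.factorial 0 : ℝ)) = 1 by norm_num]
    exact Tendsto.congr (fun m => (hone m).symm) tendsto_const_nhds
  | succ d ihd =>
    intro ℓ hℓ
    have hk0 : (k : ℝ) ≠ 0 := by positivity
    have hℓk : ℓ < k := by omega
    have hd! : (Nat.factorial d : ℝ) ≠ 0 := Nat.cast_ne_zero.mpr (Nat.factorial_ne_zero d)
    set a : ℝ := (ℓ : ℝ) / k with hadef
    have h0 : 0 ≤ a := by positivity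
    have h1 : a < 1 := by
      rw [hadef, div_lt_one (by positivity)]
      exact_mod_cast hℓk
    have hw : Tendsto (fun m => (2 / (k:ℝ)) * ((gfun k m (ℓ+1) : ℝ) / (k:ℝ) ^ m)) atTop
        (nhds ((2 / (k:ℝ)) * ((2:ℝ) ^ d / (Nat.factorial d : ℝ)))) :=
      (ihd (ℓ+1) (by omega)).const_mul _
    have hu : ∀ m, (gfun k (m+1) ℓ : ℝ) / (k:ℝ) ^ (m+1) =
        a * ((gfun k m ℓ : ℝ) / (k:ℝ) ^ m) +
          (2 / (k:ℝ)) * ((gfun k m (ℓ+1) : ℝ) / (k:ℝ) ^ m) := by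
      intro m
      rw [show gfun k (m+1) ℓ = ℓ * gfun k m ℓ + 2 * gfun k m (ℓ+1) from rfl]
      have hkm : (k:ℝ) ^ m ≠ 0 := pow_ne_zero _ hk0
      push_cast
      rw [hadef, pow_succ, div_mul_div_comm, div_mul_div_comm, ← add_div,
        mul_comm ((k:ℝ)) ((k:ℝ)^m)]
    have hlim := rec_limit a _ h0 h1 (fun m => (gfun k m ℓ : ℝ) / (k:ℝ) ^ m) _ hw hu
    have hcast : (ℓ:ℝ) + ((d:ℝ) + 1) = (k:ℝ) := by
      have : ((ℓ + (d+1) : ℕ) : ℝ) = (k : ℕ) := by rw [hℓ]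
      push_cast at this
      linarith
    have hconst : (2 / (k:ℝ) * ((2:ℝ)^d / (Nat.factorial d : ℝ))) / (1 - a) =
        (2:ℝ)^(d+1) / (Nat.factorial (d+1) : ℝ) := by
      rw [hadef, Nat.factorial_succ]
      have hkpos : (0:ℝ) < k := by positivity
      have h1ma : (1:ℝ) - (ℓ:ℝ)/k = ((d:ℝ)+1)/k := by
        field_simp
        linarith
      rw [h1ma]
      have hd1 : ((d:ℝ) + 1) ≠ 0 := by positivity
      push_cast
      field_simp
      ring
    rw [hconst] at hlim
    exact hlim

end Analytic

lemma length_le_sum : ∀ l : List ℕ, (∀ x ∈ l, 0 < x) → l.length ≤ l.sum := by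
  intro l
  induction l with
  | nil => intro _; simp
  | cons a t ih =>
    intro h
    have ha : 0 < a := h a (by simp)
    have := ih (fun x hx => h x (by simp [hx]))
    simp only [List.length_cons, List.sum_cons]
    omega

lemma length_lt_sum : ∀ l : List ℕ, (∀ x ∈ l, 0 < x) → ∀ a ∈ l, a ≠ 1 → l.length < l.sum := by
  intro l
  induction l with
  | nil => intro _ a ha; simp at ha
  | cons b t ih =>
    intro h a ha hne
    have hb : 0 < b := h b (by simp)
    have ht : ∀ x ∈ t, 0 < x := fun x hx => h x (by simp [hx])
    simp only [List.length_cons, List.sum_cons]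
    rcases List.mem_cons.mp ha with rfl | hat
    · have := length_le_sum t ht
      omega
    · have := ih ht a hat hne
      omega

theorem stmt11 (α : List ℕ) (hα : IsComposition α) (N r : ℕ) (hN : α.sum = N)
    (hr : α.length = r) (hr1 : 1 ≤ r) (hno : ¬ ∀ a ∈ α, a = 1)
    (k : ℕ) (hk : r ≤ k) :
    Filter.Tendsto (fun n => (ank coverN α n k : ℝ) / (k : ℝ) ^ n) Filter.atTop
      (nhds ((2 : ℝ) ^ (k - r) / ((k : ℝ) ^ N * (Nat.factorial (k - r) : ℝ)))) := by
  have hrk1 : 1 ≤ k := le_trans hr1 hk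
  have hk0 : (k : ℝ) ≠ 0 := by positivity
  have hαlt : α.length < α.sum := by
    push_neg at hno
    obtain ⟨a, ha, hne⟩ := hno
    exact length_lt_sum α hα a ha hne
  have hL := (gfun_limit k hrk1 (k - r) r (by omega)).comp
    (Filter.tendsto_sub_atTop_nat N)
  have hdiv := hL.div_const ((k : ℝ) ^ N)
  have htarget : ((2:ℝ) ^ (k - r) / (Nat.factorial (k - r) : ℝ)) / (k : ℝ) ^ N
      = (2:ℝ) ^ (k - r) / ((k : ℝ) ^ N * (Nat.factorial (k - r) : ℝ)) := by
    rw [div_div, mul_comm]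
  rw [htarget] at hdiv
  refine hdiv.congr' ?_
  filter_upwards [Filter.eventually_ge_atTop N] with n hn
  have hform : ank coverN α n k = gfun k (n - N) r := by
    have h2 := (main_count k (n - N) α n hαlt (by omega)).2
    rw [show ank coverN α n k = Nat.card (ChainT α n k) from rfl, h2, hr]
  have hpow : (k : ℝ) ^ n = (k : ℝ) ^ (n - N) * (k : ℝ) ^ N := by
    rw [← pow_add]
    congr 1
    omega
  simp only [Function.comp]
  rw [hform, hpow, ← div_div]
end
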